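/- arXiv:2210.07835 — 4 statements merged into one kernel-verified Lean document; each statement's English description precedes it below -/
import Mathlib

section
/- Let k ≥ 2 and let G be a complete k-partite graph in which every partition class has at least three vertices. Then μ(G) = μt(G). -/
open SimpleGraph

/-- Vertices `x` and `y` are `X`-visible in `G`: some shortest `x,y`-path has
no internal vertex in `X`. -/
def Visible {V : Type*} (G : SimpleGraph V) (X : Set V) (x y : V) : Prop :=
  ∃ p : G.Walk x y, p.length = G.dist x y ∧ ∀ v ∈ p.support, v ∈ X → v = x ∨ v = y

/-- `X` is a mutual-visibility set of `G`: every two vertices of `X` are `X`-visible. -/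
def IsMVSet {V : Type*} (G : SimpleGraph V) (X : Set V) : Prop :=
  ∀ x ∈ X, ∀ y ∈ X, Visible G X x y

/-- `X` is a total mutual-visibility set of `G`: every two vertices of `G` are
`X`-visible. -/
def IsTMVSet {V : Type*} (G : SimpleGraph V) (X : Set V) : Prop :=
  ∀ x y : V, Visible G X x y

/-- The mutual-visibility number of `G`: the maximum cardinality of a
mutual-visibility set. -/
noncomputable def mu {V : Type*} (G : SimpleGraph V) : ℕ :=
  sSup {n | ∃ X : Set V, IsMVSet G X ∧ X.ncard = n}

/-- The total mutual-visibility number of `G`: the maximum cardinality of a total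
mutual-visibility set. -/
noncomputable def muT {V : Type*} (G : SimpleGraph V) : ℕ :=
  sSup {n | ∃ X : Set V, IsTMVSet G X ∧ X.ncard = n}

/-- A feasible total mutual-visibility set: a total mutual-visibility set `S` such that
any two adjacent vertices of `S` have a common neighbor outside `S`. -/
def IsFeasibleTMVSet {V : Type*} (G : SimpleGraph V) (S : Set V) : Prop :=
  IsTMVSet G S ∧ ∀ x ∈ S, ∀ y ∈ S, G.Adj x y → ∃ z ∉ S, G.Adj x z ∧ G.Adj y z

/-- The strong product of two simple graphs. -/
def strongProd {α β : Type*} (G : SimpleGraph α) (H : SimpleGraph β) :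
    SimpleGraph (α × β) where
  Adj x y := (G.Adj x.1 y.1 ∧ x.2 = y.2) ∨ (x.1 = y.1 ∧ H.Adj x.2 y.2) ∨
    (G.Adj x.1 y.1 ∧ H.Adj x.2 y.2)
  symm := by
    constructor
    rintro ⟨a, b⟩ ⟨c, d⟩ (⟨h1, h2⟩ | ⟨h1, h2⟩ | ⟨h1, h2⟩)
    · exact Or.inl ⟨h1.symm, h2.symm⟩
    · exact Or.inr (Or.inl ⟨h1.symm, h2.symm⟩)
    · exact Or.inr (Or.inr ⟨h1.symm, h2.symm⟩)
  loopless := by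
    constructor
    rintro ⟨a, b⟩ (⟨h, _⟩ | ⟨_, h⟩ | ⟨h, _⟩)
    · exact G.loopless.irrefl a h
    · exact H.loopless.irrefl b h
    · exact G.loopless.irrefl a h

/-- The iterated (associative) strong product of a finite family of graphs:
two tuples are adjacent iff they are distinct and agree or are adjacent in every
coordinate. -/
def strongProdPi {k : ℕ} {V : Fin k → Type*} (G : ∀ i, SimpleGraph (V i)) :
    SimpleGraph (∀ i, V i) where
  Adj x y := x ≠ y ∧ ∀ i, x i = y i ∨ (G i).Adj (x i) (y i)
  symm := by
    constructor
    rintro x y ⟨hne, h⟩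
    exact ⟨hne.symm, fun i => (h i).imp Eq.symm fun hh => (G i).symm.symm _ _ hh⟩
  loopless := ⟨fun x h => h.1 rfl⟩

/-- A universal vertex: adjacent to all other vertices. -/
def IsUniversal {V : Type*} (G : SimpleGraph V) (v : V) : Prop :=
  ∀ u : V, u ≠ v → G.Adj v u

/-- A cut vertex: its removal disconnects the graph. -/
def IsCutVertex {V : Type*} (G : SimpleGraph V) (v : V) : Prop :=
  ¬ (G.induce ({v}ᶜ : Set V)).Preconnected

/-- An induced path: a path with no chords between its vertices. -/
def IsInducedPath {V : Type*} (G : SimpleGraph V) {u v : V} (p : G.Walk u v) : Prop :=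
  p.IsPath ∧ ∀ a b : V, a ∈ p.support → b ∈ p.support → G.Adj a b → s(a, b) ∈ p.edges

/-- A block graph: a connected graph in which every pair of vertices is joined
by a unique induced path. -/
def IsBlockGraph {V : Type*} (G : SimpleGraph V) : Prop :=
  G.Connected ∧ ∀ u v : V, ∃! p : G.Walk u v, IsInducedPath G p

/-- A convex set of vertices: every shortest path of `G` between two of its
vertices stays inside the set. -/
def IsConvexSet {V : Type*} (G : SimpleGraph V) (A : Set V) : Prop :=
  ∀ x ∈ A, ∀ y ∈ A, ∀ p : G.Walk x y, p.length = G.dist x y → ∀ v ∈ p.support, v ∈ A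

/-- A cactus graph: a connected graph in which every edge lies in at most one cycle,
i.e. two cycles sharing an edge have the same edge set. -/
def IsCactus {V : Type*} (G : SimpleGraph V) : Prop :=
  G.Connected ∧ ∀ (v : V) (p q : G.Walk v v), p.IsCycle → q.IsCycle →
    ∀ e, e ∈ p.edges → e ∈ q.edges → ∀ e', e' ∈ p.edges ↔ e' ∈ q.edges

/-- A cograph: obtained from a single vertex by repeatedly adding twins, i.e. there is
an enumeration of the vertices in which every vertex except the first is, at the
moment of its addition, a (true or false) twin of some earlier vertex in the induced
subgraph on the vertices added so far. -/
def IsCograph {V : Type*} (G : SimpleGraph V) : Prop :=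
  ∃ l : List V, l.Nodup ∧ (∀ v : V, v ∈ l) ∧
    ∀ i : Fin l.length, (i : ℕ) ≠ 0 →
      ∃ j : Fin l.length, (j : ℕ) < (i : ℕ) ∧
        ∀ z ∈ l.take ((i : ℕ) + 1), z ≠ l.get i → z ≠ l.get j →
          (G.Adj (l.get i) z ↔ G.Adj (l.get j) z)

/-- An enabling vertex: a vertex `v` adjacent to every vertex `u` of `G - v` whose
degree in `G - v` is less than `n(G) - 2`. -/
def IsEnabling {V : Type*} [Fintype V] (G : SimpleGraph V) (v : V) : Prop :=
  ∀ u : V, u ≠ v → (G.neighborSet u \ {v}).ncard < Fintype.card V - 2 → G.Adj v u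

theorem stmt_5 {V : Type*} [Fintype V] (G : SimpleGraph V) {k : ℕ} (hk : 2 ≤ k)
    (f : V → Fin k) (hadj : ∀ u v : V, G.Adj u v ↔ f u ≠ f v)
    (hcard : ∀ i : Fin k, 3 ≤ {v | f v = i}.ncard) :
    mu G = muT G := by
  classical
  set n := Fintype.card V with hn
  -- each part is nonempty
  have hpart : ∀ i : Fin k, ∃ v, f v = i := by
    intro i
    have h3 := hcard i
    have hne : {v | f v = i}.Nonempty := by
      apply Set.nonempty_of_ncard_ne_zero; omega
    exact hne
  let j0 : Fin k := ⟨0, by omega⟩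
  let j1 : Fin k := ⟨1, by omega⟩
  have hj01 : j0 ≠ j1 := by
    intro h; exact absurd (congrArg Fin.val h) (by simp [j0, j1])
  obtain ⟨z0, hz0⟩ := hpart j0
  obtain ⟨z1, hz1⟩ := hpart j1
  -- distance between distinct vertices in the same part is 2
  have hdist2 : ∀ x y : V, x ≠ y → f x = f y → G.dist x y = 2 := by
    intro x y hxy hf
    obtain ⟨z, hz⟩ : ∃ z : V, f z ≠ f x := by
      by_cases h0 : f x = j0
      · exact ⟨z1, by rw [hz1, h0]; exact hj01.symm⟩
      · exact ⟨z0, by rw [hz0]; exact fun h => h0 h.symm⟩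
    have hxz : G.Adj x z := (hadj x z).2 (fun h => hz h.symm)
    have hzy : G.Adj z y := (hadj z y).2 (by rw [← hf]; exact hz)
    let p : G.Walk x y := Walk.cons hxz (Walk.cons hzy Walk.nil)
    have hle : G.dist x y ≤ 2 := by
      have := SimpleGraph.dist_le p
      simpa [p] using this
    have hne0 : G.dist x y ≠ 0 := by
      have hreach : G.Reachable x y := ⟨p⟩
      have := hreach.pos_dist_of_ne hxy
      omega
    have hne1 : G.dist x y ≠ 1 := by
      intro h
      have : G.Adj x y := SimpleGraph.dist_eq_one_iff_adj.1 h
      exact (hadj x y).1 this hf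
    omega
  -- upper bound: any mutual-visibility set has at most n - 2 vertices
  have hub : ∀ X : Set V, IsMVSet G X → X.ncard ≤ n - 2 := by
    intro X hX
    by_contra hcon
    have hcompl : X.ncard + Xᶜ.ncard = n := by
      rw [Set.ncard_add_ncard_compl, Nat.card_eq_fintype_card]
    have hX1 : Xᶜ.ncard ≤ 1 := by
      have hXn : X.ncard ≤ n := by omega
      omega
    -- Xᶜ ⊆ {z} for some z
    obtain ⟨z, hzsub⟩ : ∃ z : V, Xᶜ ⊆ {z} := by
      by_cases hne : Xᶜ.Nonempty
      · obtain ⟨z, hz⟩ := hne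
        refine ⟨z, fun w hw => ?_⟩
        exact (Set.ncard_le_one (Set.toFinite _)).1 hX1 w hw z hz
      · exact ⟨z0, fun w hw => absurd ⟨w, hw⟩ hne⟩
    -- two vertices of the part of z, distinct from z, both in X
    have h3 := hcard (f z)
    have h2 : 1 < ({v | f v = f z} \ {z}).ncard := by
      have := Set.ncard_diff_singleton_add_one (s := {v | f v = f z}) (a := z)
      by_cases hzz : z ∈ {v | f v = f z}
      · have := Set.ncard_diff_singleton_add_one hzz (Set.toFinite _)
        omega
      · exact absurd rfl hzz
    obtain ⟨x, y, hx, hy, hxy⟩ := (Set.one_lt_ncard_iff (Set.toFinite _)).1 h2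
    have hxX : x ∈ X := by
      by_contra h
      have : x ∈ Xᶜ := h
      exact hx.2 (hzsub this)
    have hyX : y ∈ X := by
      by_contra h
      have : y ∈ Xᶜ := h
      exact hy.2 (hzsub this)
    obtain ⟨p, hplen, hpsup⟩ := hX x hxX y hyX
    have hfxy : f x = f y := hx.1.trans hy.1.symm
    have hd : G.dist x y = 2 := hdist2 x y hxy hfxy
    rw [hd] at hplen
    set w := p.getVert 1 with hw
    have hxw : G.Adj x w := by
      have := p.adj_getVert_succ (i := 0) (by omega)
      simpa [Walk.getVert_zero] using this
    have hwy : G.Adj w y := by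
      have := p.adj_getVert_succ (i := 1) (by omega)
      have h2' : p.getVert 2 = y := by
        have := p.getVert_length
        rw [hplen] at this
        exact this
      rwa [h2'] at this
    have hwsup : w ∈ p.support := by
      rw [Walk.mem_support_iff_exists_getVert]
      exact ⟨1, rfl, by omega⟩
    have hwX : w ∉ X := by
      intro hmem
      rcases hpsup w hwsup hmem with h | h
      · exact G.irrefl (h ▸ hxw)
      · exact G.irrefl (h ▸ hwy)
    have hwz : w = z := hzsub hwX
    have : f x ≠ f w := (hadj x w).1 hxw
    exact this (by rw [hwz, hx.1])
  -- construction of a total mutual-visibility set of size n - 2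
  have hz01 : z0 ≠ z1 := by
    intro h; apply hj01; rw [← hz0, ← hz1, h]
  set X0 : Set V := ({z0, z1} : Set V)ᶜ with hX0def
  have hX0t : IsTMVSet G X0 := by
    intro x y
    by_cases hxy : x = y
    · subst hxy
      exact ⟨Walk.nil, by simp [SimpleGraph.dist_self], by simp⟩
    · by_cases hf : f x = f y
      · obtain ⟨z, hzmem, hz⟩ : ∃ z : V, z ∈ ({z0, z1} : Set V) ∧ f z ≠ f x := by
          by_cases h0 : f x = j0
          · exact ⟨z1, by simp, by rw [hz1, h0]; exact hj01.symm⟩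
          · exact ⟨z0, by simp, by rw [hz0]; exact fun h => h0 h.symm⟩
        have hxz : G.Adj x z := (hadj x z).2 (fun h => hz h.symm)
        have hzy : G.Adj z y := (hadj z y).2 (by rw [← hf]; exact hz)
        refine ⟨Walk.cons hxz (Walk.cons hzy Walk.nil), by
          simp [hdist2 x y hxy hf], ?_⟩
        intro v hv hvX
        simp only [Walk.support_cons, Walk.support_nil, List.mem_cons,
          List.mem_singleton] at hv
        rcases hv with rfl | rfl | hv
        · exact Or.inl rfl
        · exact absurd hzmem hvX
        · simp at hv; exact Or.inr hv
      · have hadjxy : G.Adj x y := (hadj x y).2 hf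
        refine ⟨Walk.cons hadjxy Walk.nil, by
          simp [SimpleGraph.dist_eq_one_iff_adj.2 hadjxy], ?_⟩
        intro v hv _
        simp only [Walk.support_cons, Walk.support_nil, List.mem_cons,
          List.mem_singleton] at hv
        rcases hv with rfl | hv
        · exact Or.inl rfl
        · simp at hv; exact Or.inr hv
  have hX0card : X0.ncard = n - 2 := by
    have hpair : ({z0, z1} : Set V).ncard = 2 := Set.ncard_pair hz01
    have hcompl : ({z0, z1} : Set V).ncard + X0.ncard = n := by
      rw [hX0def, Set.ncard_add_ncard_compl, Nat.card_eq_fintype_card]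
    rw [hpair] at hcompl
    omega
  -- conclude
  have hX0m : IsMVSet G X0 := fun x _ y _ => hX0t x y
  have hMVbdd : BddAbove {m | ∃ X : Set V, IsMVSet G X ∧ X.ncard = m} := by
    refine ⟨n - 2, fun m hm => ?_⟩
    obtain ⟨X, hX, rfl⟩ := hm
    exact hub X hX
  have hTVbdd : BddAbove {m | ∃ X : Set V, IsTMVSet G X ∧ X.ncard = m} := by
    refine ⟨n - 2, fun m hm => ?_⟩
    obtain ⟨X, hX, rfl⟩ := hm
    exact hub X (fun x _ y _ => hX x y)
  have hmu : mu G = n - 2 := by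
    apply le_antisymm
    · refine csSup_le ⟨n - 2, X0, hX0m, hX0card⟩ (fun m hm => ?_)
      obtain ⟨X, hX, rfl⟩ := hm
      exact hub X hX
    · exact le_csSup hMVbdd ⟨X0, hX0m, hX0card⟩
  have hmuT : muT G = n - 2 := by
    apply le_antisymm
    · refine csSup_le ⟨n - 2, X0, hX0t, hX0card⟩ (fun m hm => ?_)
      obtain ⟨X, hX, rfl⟩ := hm
      exact hub X (fun x _ y _ => hX x y)
    · exact le_csSup hTVbdd ⟨X0, hX0t, hX0card⟩
  rw [hmu, hmuT]
end

section
/- Every complete split graph G satisfies μ(G) = μt(G). -/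
open SimpleGraph

section Aux

variable {V : Type*} {G : SimpleGraph V}

lemma vis_self (X : Set V) (x : V) : Visible G X x x :=
  ⟨SimpleGraph.Walk.nil, by simp [SimpleGraph.dist_self], by simp⟩

lemma vis_adj (X : Set V) {x y : V} (hxy : G.Adj x y) : Visible G X x y := by
  refine ⟨SimpleGraph.Walk.cons hxy SimpleGraph.Walk.nil, ?_, ?_⟩
  · simp [SimpleGraph.dist_eq_one_iff_adj.mpr hxy]
  · intro v hv _
    simpa using hv

lemma middle_not {X : Set V} {a b : V} (hab : a ≠ b) (hnadj : ¬ G.Adj a b)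
    (hd : G.dist a b ≤ 2) (hv : Visible G X a b) : ∃ m, m ∉ X := by
  obtain ⟨p, hlen, hint⟩ := hv
  cases p with
  | nil => exact absurd rfl hab
  | @cons _ m _ h1 q =>
    cases q with
    | nil => exact absurd h1 hnadj
    | cons h2 r =>
      cases r with
      | nil =>
        refine ⟨m, fun hmX => ?_⟩
        rcases hint m (by simp) hmX with rfl | rfl
        · exact G.loopless.irrefl _ h1
        · exact G.loopless.irrefl _ h2
      | cons h3 r' =>
        simp only [SimpleGraph.Walk.length_cons] at hlen
        omega

end Aux

theorem stmt_6 {V : Type*} [Fintype V] (G : SimpleGraph V) (hG : G.Connected)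
    (A : Set V) (h : ∀ u v : V, G.Adj u v ↔ u ≠ v ∧ (u ∉ A ∨ v ∉ A)) :
    mu G = muT G := by
  classical
  have card_le : ∀ X : Set V, X.ncard ≤ Fintype.card V := by
    intro X
    calc X.ncard ≤ (Set.univ : Set V).ncard :=
          Set.ncard_le_ncard (Set.subset_univ X) Set.finite_univ
      _ = Fintype.card V := by rw [Set.ncard_univ, Nat.card_eq_fintype_card]
  have bddMV : BddAbove {n | ∃ X : Set V, IsMVSet G X ∧ X.ncard = n} :=
    ⟨Fintype.card V, by rintro n ⟨X, _, rfl⟩; exact card_le X⟩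
  have bddTMV : BddAbove {n | ∃ X : Set V, IsTMVSet G X ∧ X.ncard = n} :=
    ⟨Fintype.card V, by rintro n ⟨X, _, rfl⟩; exact card_le X⟩
  have tmv_mv : ∀ X : Set V, IsTMVSet G X → IsMVSet G X := fun X hX x _ y _ => hX x y
  by_cases hA : ∃ a ∈ A, ∃ b ∈ A, a ≠ b
  · obtain ⟨a, ha, b, hb, hab⟩ := hA
    have adj_of : ∀ x y : V, x ≠ y → (x ∉ A ∨ y ∉ A) → G.Adj x y :=
      fun x y h1 h2 => (h x y).mpr ⟨h1, h2⟩
    obtain ⟨c, hcA⟩ : ∃ c, c ∉ A := by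
      obtain ⟨w⟩ := hG.preconnected a b
      cases w with
      | nil => exact absurd rfl hab
      | @cons _ x _ hadj q =>
        exact ⟨x, fun hx => (((h a x).mp hadj).2).elim (fun h' => h' ha) (fun h' => h' hx)⟩
    have hnadjab : ¬ G.Adj a b := fun hadj =>
      (((h a b).mp hadj).2).elim (fun h' => h' ha) (fun h' => h' hb)
    -- the set X₀ = {c}ᶜ is a total mutual-visibility set
    have hTMV : IsTMVSet G ({c}ᶜ : Set V) := by
      intro x y
      by_cases hxy : x = y
      · exact hxy ▸ vis_self _ x
      by_cases hadj : G.Adj x y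
      · exact vis_adj _ hadj
      have hxA : x ∈ A := by
        by_contra hx
        exact hadj (adj_of x y hxy (Or.inl hx))
      have hyA : y ∈ A := by
        by_contra hy
        exact hadj (adj_of x y hxy (Or.inr hy))
      have hxc : x ≠ c := fun e => hcA (e ▸ hxA)
      refine ⟨SimpleGraph.Walk.cons (adj_of x c hxc (Or.inr hcA))
        (SimpleGraph.Walk.cons (adj_of c y (fun e => hcA (e ▸ hyA)) (Or.inl hcA))
          SimpleGraph.Walk.nil), ?_, ?_⟩
      · have hle : G.dist x y ≤ 2 := by
          have := SimpleGraph.dist_le (SimpleGraph.Walk.cons (adj_of x c hxc (Or.inr hcA))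
            (SimpleGraph.Walk.cons (adj_of c y (fun e => hcA (e ▸ hyA)) (Or.inl hcA))
              SimpleGraph.Walk.nil))
          simpa using this
        have h0 : G.dist x y ≠ 0 := fun e => hxy (hG.dist_eq_zero_iff.mp e)
        have h1 : G.dist x y ≠ 1 := fun e => hadj (SimpleGraph.dist_eq_one_iff_adj.mp e)
        simp only [SimpleGraph.Walk.length_cons, SimpleGraph.Walk.length_nil]
        omega
      · intro v hv hvX
        simp only [SimpleGraph.Walk.support_cons, SimpleGraph.Walk.support_nil,
          List.mem_cons, List.mem_singleton] at hv
        rcases hv with rfl | rfl | rfl | hfalse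
        · exact Or.inl rfl
        · exact absurd rfl hvX
        · exact Or.inr rfl
        · exact absurd hfalse List.not_mem_nil
    have hncard : ({c}ᶜ : Set V).ncard = Fintype.card V - 1 := by
      have := Set.ncard_add_ncard_compl ({c} : Set V)
      rw [Nat.card_eq_fintype_card] at this
      have h1 : ({c} : Set V).ncard = 1 := Set.ncard_singleton c
      omega
    have hub : ∀ X : Set V, Visible G X a b → X.ncard ≤ Fintype.card V - 1 := by
      intro X hvis
      have hd : G.dist a b ≤ 2 := by
        have := SimpleGraph.dist_le (SimpleGraph.Walk.cons
          (adj_of a c (fun e => hcA (e ▸ ha)) (Or.inr hcA))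
          (SimpleGraph.Walk.cons (adj_of c b (fun e => hcA (e ▸ hb)) (Or.inl hcA))
            SimpleGraph.Walk.nil))
        simpa using this
      obtain ⟨m, hm⟩ := middle_not hab hnadjab hd hvis
      have hne : X ≠ Set.univ := fun e => hm (e ▸ Set.mem_univ m)
      have hlt : X.ncard < Fintype.card V := by
        have := Set.ncard_lt_ncard (Set.ssubset_univ_iff.mpr hne) Set.finite_univ
        rwa [Set.ncard_univ, Nat.card_eq_fintype_card] at this
      omega
    have hmuT : muT G = Fintype.card V - 1 := by
      apply le_antisymm
      · refine csSup_le ⟨Fintype.card V - 1, ⟨({c}ᶜ : Set V), hTMV, hncard⟩⟩ ?_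
        rintro n ⟨X, hX, rfl⟩
        exact hub X (hX a b)
      · exact le_csSup bddTMV ⟨({c}ᶜ : Set V), hTMV, hncard⟩
    have hmu : mu G = Fintype.card V - 1 := by
      apply le_antisymm
      · refine csSup_le ⟨Fintype.card V - 1, ⟨({c}ᶜ : Set V), tmv_mv _ hTMV, hncard⟩⟩ ?_
        rintro n ⟨X, hX, rfl⟩
        by_cases haX : a ∈ X
        · by_cases hbX : b ∈ X
          · exact hub X (hX a haX b hbX)
          · have hne : X ≠ Set.univ := fun e => hbX (e ▸ Set.mem_univ b)
            have hlt : X.ncard < Fintype.card V := by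
              have := Set.ncard_lt_ncard (Set.ssubset_univ_iff.mpr hne) Set.finite_univ
              rwa [Set.ncard_univ, Nat.card_eq_fintype_card] at this
            omega
        · have hne : X ≠ Set.univ := fun e => haX (e ▸ Set.mem_univ a)
          have hlt : X.ncard < Fintype.card V := by
            have := Set.ncard_lt_ncard (Set.ssubset_univ_iff.mpr hne) Set.finite_univ
            rwa [Set.ncard_univ, Nat.card_eq_fintype_card] at this
          omega
      · exact le_csSup bddMV ⟨({c}ᶜ : Set V), tmv_mv _ hTMV, hncard⟩
    rw [hmu, hmuT]
  · -- A has at most one element: G is complete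
    push_neg at hA
    have hTMV : IsTMVSet G (Set.univ : Set V) := by
      intro x y
      by_cases hxy : x = y
      · exact hxy ▸ vis_self _ x
      · refine vis_adj _ ((h x y).mpr ⟨hxy, ?_⟩)
        by_contra hc
        push_neg at hc
        exact hxy (hA x hc.1 y hc.2)
    have hcard : (Set.univ : Set V).ncard = Fintype.card V := by
      rw [Set.ncard_univ, Nat.card_eq_fintype_card]
    have hmuT : muT G = Fintype.card V := by
      apply le_antisymm
      · refine csSup_le ⟨Fintype.card V, ⟨Set.univ, hTMV, hcard⟩⟩ ?_
        rintro n ⟨X, _, rfl⟩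
        exact card_le X
      · exact le_csSup bddTMV ⟨Set.univ, hTMV, hcard⟩
    have hmu : mu G = Fintype.card V := by
      apply le_antisymm
      · refine csSup_le ⟨Fintype.card V, ⟨Set.univ, tmv_mv _ hTMV, hcard⟩⟩ ?_
        rintro n ⟨X, _, rfl⟩
        exact card_le X
      · exact le_csSup bddMV ⟨Set.univ, tmv_mv _ hTMV, hcard⟩
    rw [hmu, hmuT]
end

section
/- Let k ≥ 2 and let G_1, …, G_k be finite connected non-complete simple graphs, each admitting a feasible maximum total mutual-visibility set. Then for the iterated strong product H_k = G_1 ⊠ G_2 ⊠ ⋯ ⊠ G_k it holds that μt(H_k) ≥ ∏_{i=1}^k n(G_i) − ∏_{i=1}^k (n(G_i) − μt(G_i)). -/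
open SimpleGraph

section AuxTMV

open SimpleGraph

private lemma aux_chain_walk {α : Type*} (G : SimpleGraph α) :
    ∀ (L : ℕ) (F : ℕ → α), (∀ j, j < L → G.Adj (F j) (F (j+1))) →
    ∃ p : G.Walk (F 0) (F L), p.length = L ∧ ∀ v ∈ p.support, ∃ j, j ≤ L ∧ v = F j := by
  intro L
  induction L with
  | zero => intro F _; exact ⟨Walk.nil, rfl, by simp⟩
  | succ L ih =>
    intro F h
    obtain ⟨p, hlen, hsup⟩ := ih (fun n => F (n+1)) (fun j hj => h (j+1) (by omega))
    refine ⟨Walk.cons (h 0 (by omega)) p, by simp [hlen], ?_⟩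
    intro v hv
    rw [Walk.support_cons, List.mem_cons] at hv
    rcases hv with rfl | hv
    · exact ⟨0, by omega, rfl⟩
    · obtain ⟨j, hj, rfl⟩ := hsup v hv
      exact ⟨j+1, by omega, rfl⟩

private lemma aux_getVert {α : Type*} {G : SimpleGraph α} (hc : G.Connected) :
    ∀ {x y : α} (p : G.Walk x y) (j : ℕ),
      G.dist x (p.getVert j) ≤ j ∧ G.dist (p.getVert j) y ≤ p.length - j ∧
      p.getVert j ∈ p.support := by
  intro x y p
  induction p with
  | nil =>
    intro j
    refine ⟨by simp [Walk.getVert, SimpleGraph.dist_self], by simp [Walk.getVert, SimpleGraph.dist_self], by simp [Walk.getVert]⟩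
  | @cons u v w h q ih =>
    intro j
    cases j with
    | zero =>
      refine ⟨by simp [SimpleGraph.dist_self], ?_, by simp⟩
      simpa using SimpleGraph.dist_le (Walk.cons h q)
    | succ j =>
      obtain ⟨ih1, ih2, ih3⟩ := ih j
      rw [Walk.getVert_cons_succ]
      refine ⟨?_, ?_, ?_⟩
      · have ht := hc.dist_triangle (u := u) (v := v) (w := q.getVert j)
        have h1 : G.dist u v = 1 := SimpleGraph.dist_eq_one_iff_adj.mpr h
        omega
      · simpa [Walk.length_cons, Nat.succ_sub_succ] using ih2
      · rw [Walk.support_cons]; exact List.mem_cons_of_mem _ ih3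

private lemma aux_nonadj {α : Type*} {G : SimpleGraph α} (h : G ≠ ⊤) :
    ∃ u w : α, u ≠ w ∧ ¬ G.Adj u w := by
  by_contra hcon
  push_neg at hcon
  exact h (by ext u w; simp only [top_adj]; exact ⟨fun ha => ha.ne, fun hne => hcon u w hne⟩)

private lemma aux_step {α : Type*} {G : SimpleGraph α} (hc : G.Connected) {S : Set α}
    (hS : IsTMVSet G S) {u w : α} (hd : 2 ≤ G.dist u w) : ∃ m, m ∉ S ∧ G.Adj u m := by
  obtain ⟨p, hlen, havoid⟩ := hS u w
  have h1 : 0 < p.length := by omega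
  have hadj : G.Adj u (p.getVert 1) := by
    have := p.adj_getVert_succ h1
    rwa [p.getVert_zero] at this
  refine ⟨p.getVert 1, ?_, hadj⟩
  intro hm
  rcases havoid _ (aux_getVert hc p 1).2.2 hm with h | h
  · rw [h] at hadj; exact G.irrefl hadj
  · rw [h] at hadj
    have := SimpleGraph.dist_eq_one_iff_adj.mpr hadj
    omega

private lemma aux_nbr {α : Type*} {G : SimpleGraph α} (hc : G.Connected) (hnt : G ≠ ⊤)
    {S : Set α} (hS : IsTMVSet G S) {x : α} (hx : x ∈ S) : ∃ z, z ∉ S ∧ G.Adj x z := by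
  have dist2 : ∀ u w : α, u ≠ w → ¬ G.Adj u w → 2 ≤ G.dist u w := by
    intro u w hne hna
    have h0 : G.dist u w ≠ 0 := fun h => hne (hc.dist_eq_zero_iff.mp h)
    have h1 : G.dist u w ≠ 1 := fun h => hna (SimpleGraph.dist_eq_one_iff_adj.mp h)
    omega
  by_cases huniv : ∀ u, u ≠ x → G.Adj x u
  · obtain ⟨u, w, hne, hna⟩ := aux_nonadj hnt
    obtain ⟨m, hmS, _⟩ := aux_step hc hS (dist2 u w hne hna)
    have hmx : m ≠ x := fun h => hmS (h ▸ hx)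
    exact ⟨m, hmS, huniv m hmx⟩
  · push_neg at huniv
    obtain ⟨u, hux, hna⟩ := huniv
    obtain ⟨m, hmS, hadj⟩ := aux_step hc hS (dist2 x u (Ne.symm hux) hna)
    exact ⟨m, hmS, hadj⟩

private lemma aux_coord {α : Type*} {G : SimpleGraph α} (hc : G.Connected) (hnt : G ≠ ⊤)
    {S : Set α} (hS : IsFeasibleTMVSet G S) (x y : α) (L : ℕ) (hL : 1 ≤ L)
    (hd : G.dist x y ≤ L) :
    ∃ f : ℕ → α, f 0 = x ∧ f L = y ∧ (∀ j, 0 < j → j < L → f j ∉ S) ∧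
      (∀ j, j < L → f j = f (j+1) ∨ G.Adj (f j) (f (j+1))) ∧
      (G.dist x y = L → ∀ j, j < L → G.Adj (f j) (f (j+1))) := by
  obtain ⟨p, hlen, havoid⟩ := hS.1 x y
  rcases eq_or_lt_of_le hd with heq | hlt
  · -- dist = L : take the shortest path itself
    refine ⟨p.getVert, p.getVert_zero, p.getVert_of_length_le (by omega), ?_, ?_, ?_⟩
    · intro j hj0 hjL hmem
      obtain ⟨hg1, hg2, hg3⟩ := aux_getVert hc p j
      rcases havoid _ hg3 hmem with h | h
      · rw [h] at hg2; omega
      · rw [h] at hg1; omega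
    · intro j hj; exact Or.inr (p.adj_getVert_succ (by omega))
    · intro _ j hj; exact p.adj_getVert_succ (by omega)
  · by_cases h2 : 2 ≤ G.dist x y
    · -- 2 ≤ dist < L : pad a shortest path at an internal vertex
      set d := G.dist x y with hdd
      refine ⟨fun j => if j < L then p.getVert (min j (d-1)) else y,
        by have h0 : (0:ℕ) < L := hL; simp [h0, p.getVert_zero], by simp, ?_, ?_, ?_⟩
      · intro j hj0 hjL hmem
        simp only [if_pos hjL] at hmem
        obtain ⟨hg1, hg2, hg3⟩ := aux_getVert hc p (min j (d-1))
        rcases havoid _ hg3 hmem with h | h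
        · rw [h] at hg2; omega
        · rw [h] at hg1; omega
      · intro j hj
        by_cases hjL : j + 1 < L
        · simp only [if_pos hj, if_pos hjL]
          by_cases hjd : j < d - 1
          · right
            have e1 : min j (d-1) = j := by omega
            have e2 : min (j+1) (d-1) = j + 1 := by omega
            rw [e1, e2]
            exact p.adj_getVert_succ (by omega)
          · left
            congr 1
            omega
        · right
          have hj1 : ¬ (j + 1 < L) := hjL
          simp only [if_pos hj, if_neg hj1]
          have hmin : min j (d-1) = d - 1 := by omega
          rw [hmin]
          have hstep := p.adj_getVert_succ (i := d - 1) (by omega)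
          have hdm : d - 1 + 1 = d := by omega
          rw [hdm] at hstep
          have hgy : p.getVert d = y := by rw [← hlen]; exact p.getVert_length
          rwa [hgy] at hstep
      · intro hdl; omega
    · -- dist ≤ 1 : pause at a suitable vertex z outside S
      have hxyp : (x = y ∧ G.dist x y = 0) ∨ (G.Adj x y ∧ G.dist x y = 1) := by
        rcases (by omega : G.dist x y = 0 ∨ G.dist x y = 1) with h0 | h1
        · exact Or.inl ⟨hc.dist_eq_zero_iff.mp h0, h0⟩
        · exact Or.inr ⟨SimpleGraph.dist_eq_one_iff_adj.mp h1, h1⟩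
      obtain ⟨z, hzS, hzx, hzy⟩ : ∃ z, z ∉ S ∧ (z = x ∨ G.Adj x z) ∧ (z = y ∨ G.Adj z y) := by
        rcases hxyp with ⟨hxy, -⟩ | ⟨hadj, -⟩
        · by_cases hxS : x ∈ S
          · obtain ⟨z, hz1, hz2⟩ := aux_nbr hc hnt hS.1 hxS
            exact ⟨z, hz1, Or.inr hz2, Or.inr (by rw [← hxy]; exact hz2.symm)⟩
          · exact ⟨x, hxS, Or.inl rfl, Or.inl hxy⟩
        · by_cases hxS : x ∈ S
          · by_cases hyS : y ∈ S
            · obtain ⟨z, hz1, hz2, hz3⟩ := hS.2 x hxS y hyS hadj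
              exact ⟨z, hz1, Or.inr hz2, Or.inr hz3.symm⟩
            · exact ⟨y, hyS, Or.inr hadj, Or.inl rfl⟩
          · exact ⟨x, hxS, Or.inl rfl, Or.inr hadj⟩
      have hLne : L ≠ 0 := by omega
      refine ⟨fun j => if j = 0 then x else if j = L then y else z, by simp, by simp [hLne], ?_, ?_, ?_⟩
      · intro j hj0 hjL
        have e0 : j ≠ 0 := by omega
        have eL : j ≠ L := by omega
        simpa [e0, eL] using hzS
      · intro j hj
        rcases Nat.eq_zero_or_pos j with rfl | hj0
        · simp only [if_pos rfl]
          by_cases h1L : 0 + 1 = L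
          · simp only [if_neg (by omega : (0:ℕ) + 1 ≠ 0), if_pos h1L]
            rcases hxyp with ⟨hxy, -⟩ | ⟨hadj, -⟩
            · exact Or.inl hxy
            · exact Or.inr hadj
          · simp only [if_neg (by omega : (0:ℕ) + 1 ≠ 0), if_neg h1L]
            rcases hzx with h | h
            · exact Or.inl h.symm
            · exact Or.inr h
        · have e0 : j ≠ 0 := by omega
          have eL : j ≠ L := by omega
          have e0' : j + 1 ≠ 0 := by omega
          simp only [if_neg e0, if_neg eL, if_neg e0']
          by_cases h1L : j + 1 = L
          · simp only [if_pos h1L]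
            rcases hzy with h | h
            · exact Or.inl h
            · exact Or.inr h
          · simp only [if_neg h1L]
            tauto
      · intro hdl; omega

private lemma aux_proj {k : ℕ} {V : Fin k → Type*} (G : ∀ i, SimpleGraph (V i))
    (hc : ∀ i, (G i).Connected) (i : Fin k) :
    ∀ {x y : ∀ i, V i} (p : (strongProdPi G).Walk x y),
      (G i).dist (x i) (y i) ≤ p.length := by
  intro x y p
  induction p with
  | nil => simp [SimpleGraph.dist_self]
  | @cons u v w h q ih =>
    rw [Walk.length_cons]
    rcases (show u ≠ v ∧ ∀ i, u i = v i ∨ (G i).Adj (u i) (v i) from h).2 i with heq | hadj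
    · rw [heq]; omega
    · have h1 : (G i).dist (u i) (v i) = 1 := SimpleGraph.dist_eq_one_iff_adj.mpr hadj
      have ht := (hc i).dist_triangle (u := u i) (v := v i) (w := w i)
      omega

end AuxTMV

theorem stmt_9 {k : ℕ} (hk : 2 ≤ k) {V : Fin k → Type*} [∀ i, Fintype (V i)]
    (G : ∀ i, SimpleGraph (V i)) (hconn : ∀ i, (G i).Connected)
    (hnc : ∀ i, G i ≠ ⊤)
    (hf : ∀ i, ∃ S : Set (V i), IsFeasibleTMVSet (G i) S ∧ S.ncard = muT (G i)) :
    (∏ i, Fintype.card (V i)) - ∏ i, (Fintype.card (V i) - muT (G i))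
      ≤ muT (strongProdPi G) := by
  classical
  choose S hfeas hcard using hf
  set T : Set (∀ i, V i) := {x | ∃ i, x i ∈ S i} with hT
  haveI hNe : Nonempty (Fin k) := ⟨⟨0, by omega⟩⟩
  have hTMV : IsTMVSet (strongProdPi G) T := by
    intro x y
    by_cases hxy : x = y
    · subst hxy
      exact ⟨Walk.nil, by simp [SimpleGraph.dist_self], by simp⟩
    · set d : Fin k → ℕ := fun i => (G i).dist (x i) (y i) with hd
      obtain ⟨i0, -, hi0⟩ := Finset.exists_mem_eq_sup Finset.univ Finset.univ_nonempty d
      set L := Finset.univ.sup d with hLdef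
      have hdL : ∀ i, d i ≤ L := fun i => Finset.le_sup (Finset.mem_univ i)
      have hL1 : 1 ≤ L := by
        obtain ⟨i, hi⟩ := Function.ne_iff.mp hxy
        exact le_trans ((hconn i).pos_dist_of_ne hi) (hdL i)
      have hcf := fun i => aux_coord (hconn i) (hnc i) (hfeas i) (x i) (y i) L hL1 (hdL i)
      choose f hf0 hfL hfint hflazy hfstrict using hcf
      set F : ℕ → ∀ i, V i := fun j i => f i j with hF
      have hFadj : ∀ j, j < L → (strongProdPi G).Adj (F j) (F (j+1)) := by
        intro j hj
        refine (show F j ≠ F (j+1) ∧ ∀ i, F j i = F (j+1) i ∨ (G i).Adj (F j i) (F (j+1) i) from ⟨?_, fun i => hflazy i j hj⟩)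
        intro hcon
        have hs := hfstrict i0 hi0.symm j hj
        exact hs.ne (congrFun hcon i0)
      obtain ⟨p, hplen, hpsup⟩ := aux_chain_walk (strongProdPi G) L F hFadj
      have hx0 : F 0 = x := funext fun i => hf0 i
      have hyL : F L = y := funext fun i => hfL i
      refine ⟨p.copy hx0 hyL, ?_, ?_⟩
      · rw [Walk.length_copy, hplen]
        have hle : (strongProdPi G).dist x y ≤ L := by
          have := SimpleGraph.dist_le (p.copy hx0 hyL)
          rwa [Walk.length_copy, hplen] at this
        have hge : L ≤ (strongProdPi G).dist x y := by
          have hr : (strongProdPi G).Reachable x y := ⟨p.copy hx0 hyL⟩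
          obtain ⟨q, hq⟩ := hr.exists_walk_length_eq_dist
          have hproj := aux_proj G hconn i0 q
          rw [hq] at hproj
          calc L = d i0 := hi0
            _ ≤ _ := hproj
        omega
      · intro v hv hvT
        rw [Walk.support_copy] at hv
        obtain ⟨j, hjL, rfl⟩ := hpsup v hv
        rcases Nat.eq_zero_or_pos j with rfl | hj0
        · exact Or.inl hx0
        rcases eq_or_lt_of_le hjL with rfl | hjlt
        · exact Or.inr hyL
        · exfalso
          obtain ⟨i, hi⟩ := hvT
          exact hfint i j hj0 hjlt hi
  have hcompl : Tᶜ = Set.pi Set.univ (fun i => (S i)ᶜ) := by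
    ext v
    simp only [hT, Set.mem_compl_iff, Set.mem_setOf_eq, not_exists, Set.mem_pi,
      Set.mem_univ, forall_true_left, Set.mem_compl_iff]
  have h1 : ∀ i, ((S i)ᶜ).ncard = Fintype.card (V i) - muT (G i) := by
    intro i
    have h := Set.ncard_add_ncard_compl (S i)
    rw [hcard i, Nat.card_eq_fintype_card] at h
    omega
  have hTc : Tᶜ.ncard = ∏ i, (Fintype.card (V i) - muT (G i)) := by
    rw [hcompl]
    have hps : Set.pi Set.univ (fun i => (S i)ᶜ) =
        ↑(Fintype.piFinset fun i => ((S i)ᶜ).toFinset) := by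
      rw [Fintype.coe_piFinset]
      simp
    rw [hps, Set.ncard_coe_finset, Fintype.card_piFinset]
    exact Finset.prod_congr rfl fun i _ => by
      rw [← Set.ncard_eq_toFinset_card']; exact h1 i
  have hTcard : T.ncard + ∏ i, (Fintype.card (V i) - muT (G i)) = ∏ i, Fintype.card (V i) := by
    have h := Set.ncard_add_ncard_compl T
    rw [hTc, Nat.card_eq_fintype_card, Fintype.card_pi] at h
    exact h
  have hbdd : BddAbove {n | ∃ X : Set (∀ i, V i), IsTMVSet (strongProdPi G) X ∧ X.ncard = n} := by
    refine ⟨Fintype.card (∀ i, V i), ?_⟩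
    rintro n ⟨X, -, rfl⟩
    calc X.ncard ≤ (Set.univ : Set (∀ i, V i)).ncard :=
          Set.ncard_le_ncard (Set.subset_univ X) Set.finite_univ
      _ = _ := by rw [Set.ncard_univ, Nat.card_eq_fintype_card]
  have hle : T.ncard ≤ muT (strongProdPi G) :=
    le_csSup hbdd ⟨T, hTMV, rfl⟩
  omega
end

section
/- Let G be a finite connected simple graph with μ(G) = μt(G) that admits a feasible maximum total mutual-visibility set. Then μ(G ⊠ P_2) ≥ μ(G) + n(G). -/
open SimpleGraph

section Aux

variable {V : Type*} {G : SimpleGraph V}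

private lemma padj01 : (SimpleGraph.pathGraph 2).Adj 0 1 := by
  rw [SimpleGraph.pathGraph_adj]; left; rfl

lemma adjH {a b : V} (h : G.Adj a b) (c : Fin 2) :
    (strongProd G (SimpleGraph.pathGraph 2)).Adj (a, c) (b, c) :=
  Or.inl ⟨h, rfl⟩

lemma adjV (a : V) {i j : Fin 2} (h : (SimpleGraph.pathGraph 2).Adj i j) :
    (strongProd G (SimpleGraph.pathGraph 2)).Adj (a, i) (a, j) :=
  Or.inr (Or.inl ⟨rfl, h⟩)

lemma adjD {a b : V} (h : G.Adj a b) {i j : Fin 2} (h' : (SimpleGraph.pathGraph 2).Adj i j) :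
    (strongProd G (SimpleGraph.pathGraph 2)).Adj (a, i) (b, j) :=
  Or.inr (Or.inr ⟨h, h'⟩)

/-- horizontal lift of a walk at layer 1 -/
def lift1 : ∀ {a b : V}, G.Walk a b →
    (strongProd G (SimpleGraph.pathGraph 2)).Walk (a, 1) (b, 1)
  | _, _, SimpleGraph.Walk.nil => SimpleGraph.Walk.nil
  | _, _, SimpleGraph.Walk.cons h p => SimpleGraph.Walk.cons (adjH h 1) (lift1 p)

lemma lift1_length {a b : V} (p : G.Walk a b) : (lift1 p).length = p.length := by
  induction p with
  | nil => rfl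
  | cons h p ih => simpa [lift1] using ih

lemma lift1_support {a b : V} (p : G.Walk a b) :
    (lift1 p).support = p.support.map (fun v => (v, (1 : Fin 2))) := by
  induction p with
  | nil => rfl
  | cons h p ih => simp [lift1, ih]

/-- lift of a nonempty walk at layer 1, dropping to layer 0 at the last step -/
def liftEnd : ∀ {a b c : V}, G.Adj a b → G.Walk b c →
    (strongProd G (SimpleGraph.pathGraph 2)).Walk (a, 1) (c, 0)
  | _, _, _, h, SimpleGraph.Walk.nil =>
      SimpleGraph.Walk.cons (adjD h padj01.symm) SimpleGraph.Walk.nil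
  | _, _, _, h, SimpleGraph.Walk.cons h' p =>
      SimpleGraph.Walk.cons (adjH h 1) (liftEnd h' p)

lemma liftEnd_length : ∀ {a b c : V} (h : G.Adj a b) (p : G.Walk b c),
    (liftEnd h p).length = p.length + 1
  | _, _, _, _, SimpleGraph.Walk.nil => rfl
  | _, _, _, _, SimpleGraph.Walk.cons h' p => by
      simpa [liftEnd] using liftEnd_length h' p

lemma liftEnd_support : ∀ {a b c : V} (h : G.Adj a b) (p : G.Walk b c),
    (SimpleGraph.Walk.cons h p).IsPath →
    ∀ v ∈ (liftEnd h p).support,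
      v = (c, (0 : Fin 2)) ∨ (v.2 = 1 ∧ v.1 ∈ (SimpleGraph.Walk.cons h p).support ∧ v.1 ≠ c)
  | a, b, _, h, SimpleGraph.Walk.nil, hp, v, hv => by
      simp only [liftEnd, SimpleGraph.Walk.support_cons, SimpleGraph.Walk.support_nil,
        List.mem_cons, List.mem_singleton] at hv
      rcases hv with rfl | rfl | h'
      · exact Or.inr ⟨rfl, by simp, h.ne⟩
      · exact Or.inl rfl
      · exact absurd h' (by simp)
  | a, b, c, h, SimpleGraph.Walk.cons h' p, hp, v, hv => by
      simp only [liftEnd, SimpleGraph.Walk.support_cons, List.mem_cons] at hv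
      have hp' : (SimpleGraph.Walk.cons h' p).IsPath ∧
          a ∉ (SimpleGraph.Walk.cons h' p).support :=
        (SimpleGraph.Walk.cons_isPath_iff _ _).mp hp
      rcases hv with rfl | hv
      · refine Or.inr ⟨rfl, by simp, ?_⟩
        intro hac
        exact hp'.2 (hac ▸ (SimpleGraph.Walk.cons h' p).end_mem_support)
      · rcases liftEnd_support h' p hp'.1 v hv with h1 | ⟨h1, h2, h3⟩
        · exact Or.inl h1
        · refine Or.inr ⟨h1, ?_, h3⟩
          simp only [SimpleGraph.Walk.support_cons, List.mem_cons] at h2 ⊢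
          exact Or.inr h2

lemma dist_fst_le (hG : G.Connected) : ∀ {x y : V × Fin 2}
    (p : (strongProd G (SimpleGraph.pathGraph 2)).Walk x y), G.dist x.1 y.1 ≤ p.length
  | _, _, SimpleGraph.Walk.nil => by simp [SimpleGraph.dist_self]
  | x, y, SimpleGraph.Walk.cons (v := w) h p => by
      have h1 : G.dist x.1 w.1 ≤ 1 := by
        rcases h with ⟨h', _⟩ | ⟨h', _⟩ | ⟨h', _⟩
        · exact SimpleGraph.dist_le (SimpleGraph.Walk.cons h' SimpleGraph.Walk.nil)
        · rw [h']; simp [SimpleGraph.dist_self]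
        · exact SimpleGraph.dist_le (SimpleGraph.Walk.cons h' SimpleGraph.Walk.nil)
      calc G.dist x.1 y.1 ≤ G.dist x.1 w.1 + G.dist w.1 y.1 := hG.dist_triangle
        _ ≤ 1 + p.length := Nat.add_le_add h1 (dist_fst_le hG p)
        _ = (SimpleGraph.Walk.cons h p).length := by
            simp [SimpleGraph.Walk.length_cons, Nat.add_comm]

/-- if a product walk has length equal to the `G`-distance of the first
coordinates, it is a shortest walk -/
lemma prod_dist_eq (hG : G.Connected) {x y : V × Fin 2}
    (p : (strongProd G (SimpleGraph.pathGraph 2)).Walk x y)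
    (hp : p.length = G.dist x.1 y.1) :
    p.length = (strongProd G (SimpleGraph.pathGraph 2)).dist x y := by
  refine le_antisymm ?_ (SimpleGraph.dist_le p)
  obtain ⟨r, hr⟩ := (SimpleGraph.Reachable.exists_walk_length_eq_dist ⟨p⟩)
  calc p.length = G.dist x.1 y.1 := hp
    _ ≤ r.length := dist_fst_le hG r
    _ = _ := hr

lemma visible_symm {X : Set V} {x y : V} (h : Visible G X x y) : Visible G X y x := by
  obtain ⟨p, hl, hs⟩ := h
  refine ⟨p.reverse, by simpa [SimpleGraph.dist_comm] using hl, fun v hv hX => ?_⟩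
  exact (hs v (by simpa using hv) hX).symm

end Aux

theorem stmt_14 {V : Type*} [Fintype V] (G : SimpleGraph V) (hG : G.Connected)
    (heq : mu G = muT G)
    (hf : ∃ S : Set V, IsFeasibleTMVSet G S ∧ S.ncard = muT G) :
    mu G + Fintype.card V ≤ mu (strongProd G (SimpleGraph.pathGraph 2)) := by
  classical
  obtain ⟨S, ⟨hTMV, _⟩, hcardS⟩ := hf
  set GP := strongProd G (SimpleGraph.pathGraph 2) with hGP
  set X : Set (V × Fin 2) := {p | p.2 = 0 ∨ p.1 ∈ S} with hX
  have fin2 : ∀ i : Fin 2, i = 0 ∨ i = 1 := by decide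
  have one_ne : (1 : Fin 2) ≠ 0 := by decide
  have getpath : ∀ g g' : V, g ≠ g' → ∃ q : G.Walk g g', q.IsPath ∧
      q.length = G.dist g g' ∧ ∀ v ∈ q.support, v ∈ S → v = g ∨ v = g' := by
    intro g g' hne
    obtain ⟨q0, hl0, hs0⟩ := hTMV g g'
    refine ⟨q0.bypass, q0.bypass_isPath, le_antisymm ?_ (SimpleGraph.dist_le _), ?_⟩
    · exact hl0 ▸ q0.length_bypass_le
    · exact fun v hv => hs0 v (q0.support_bypass_subset hv)
  have vis11 : ∀ g g' : V, g ≠ g' → Visible GP X (g, 1) (g', 1) := by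
    intro g g' hne
    obtain ⟨q, hq, hl, hs⟩ := getpath g g' hne
    refine ⟨lift1 q, ?_, ?_⟩
    · exact prod_dist_eq hG (lift1 q) (by simpa [lift1_length] using hl)
    · intro v hv hvX
      rw [lift1_support, List.mem_map] at hv
      obtain ⟨u, hu, rfl⟩ := hv
      have hS : u ∈ S := by
        rcases hvX with h0 | hS
        · exact absurd h0 one_ne
        · exact hS
      rcases hs u hu hS with rfl | rfl
      · exact Or.inl rfl
      · exact Or.inr rfl
  have vis01 : ∀ g g' : V, g ≠ g' → Visible GP X (g, 0) (g', 1) := by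
    intro g g' hne
    obtain ⟨q, hq, hl, hs⟩ := getpath g g' hne
    cases q with
    | nil => exact absurd rfl hne
    | @cons _ w _ h q' =>
      have hp' := (SimpleGraph.Walk.cons_isPath_iff h q').mp hq
      refine ⟨SimpleGraph.Walk.cons (adjD h padj01) (lift1 q'), ?_, ?_⟩
      · exact prod_dist_eq hG _ (by simpa [lift1_length] using hl)
      · intro v hv hvX
        simp only [SimpleGraph.Walk.support_cons, List.mem_cons] at hv
        rcases hv with rfl | hv
        · exact Or.inl rfl
        · rw [lift1_support, List.mem_map] at hv
          obtain ⟨u, hu, rfl⟩ := hv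
          have hS : u ∈ S := by
            rcases hvX with h0 | hS
            · exact absurd h0 one_ne
            · exact hS
          have hu' : u ∈ (SimpleGraph.Walk.cons h q').support := by
            simp only [SimpleGraph.Walk.support_cons, List.mem_cons]
            exact Or.inr hu
          rcases hs u hu' hS with rfl | rfl
          · exact absurd hu hp'.2
          · exact Or.inr rfl
  have vis00 : ∀ g g' : V, g ≠ g' → Visible GP X (g, 0) (g', 0) := by
    intro g g' hne
    obtain ⟨q, hq, hl, hs⟩ := getpath g g' hne
    cases q with
    | nil => exact absurd rfl hne
    | @cons _ w _ h q' =>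
      have hp' := (SimpleGraph.Walk.cons_isPath_iff h q').mp hq
      cases q' with
      | nil =>
        refine ⟨SimpleGraph.Walk.cons (adjH h 0) SimpleGraph.Walk.nil, ?_, ?_⟩
        · exact prod_dist_eq hG _ (by simpa using hl)
        · intro v hv _
          simp only [SimpleGraph.Walk.support_cons, SimpleGraph.Walk.support_nil,
            List.mem_cons, List.mem_singleton] at hv
          rcases hv with rfl | rfl | h'
          · exact Or.inl rfl
          · exact Or.inr rfl
          · exact absurd h' (by simp)
      | @cons _ z _ h2 q'' =>
        refine ⟨SimpleGraph.Walk.cons (adjD h padj01) (liftEnd h2 q''), ?_, ?_⟩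
        · refine prod_dist_eq hG _ ?_
          simp only [SimpleGraph.Walk.length_cons, liftEnd_length]
          simpa using hl
        · intro v hv hvX
          simp only [SimpleGraph.Walk.support_cons, List.mem_cons] at hv
          rcases hv with rfl | hv
          · exact Or.inl rfl
          · rcases liftEnd_support h2 q'' hp'.1 v hv with rfl | ⟨h1, h2', h3⟩
            · exact Or.inr rfl
            · have hS : v.1 ∈ S := by
                rcases hvX with h0 | hS
                · rw [h1] at h0; exact absurd h0 one_ne
                · exact hS
              have hv1 : v.1 ∈ (SimpleGraph.Walk.cons h (SimpleGraph.Walk.cons h2 q'')).support := by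
                simp only [SimpleGraph.Walk.support_cons, List.mem_cons] at h2' ⊢
                exact Or.inr h2'
              rcases hs v.1 hv1 hS with h4 | h4
              · rw [h4] at h2'; exact absurd h2' hp'.2
              · exact absurd h4 h3
  have hMV : IsMVSet GP X := by
    rintro ⟨g, i⟩ _ ⟨g', j⟩ _
    by_cases hgg : (g, i) = ((g', j) : V × Fin 2)
    · rw [hgg]
      exact ⟨SimpleGraph.Walk.nil, by simp [SimpleGraph.dist_self], by simp⟩
    by_cases hne : g = g'
    · subst hne
      have hij : i ≠ j := fun h => hgg (by rw [h])
      have hadj : GP.Adj (g, i) (g, j) := by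
        refine adjV g ?_
        rw [SimpleGraph.pathGraph_adj]
        rcases fin2 i with rfl | rfl <;> rcases fin2 j with rfl | rfl <;>
          first | (exact absurd rfl hij) | decide
      refine ⟨SimpleGraph.Walk.cons hadj SimpleGraph.Walk.nil, ?_, ?_⟩
      · refine le_antisymm ?_ (SimpleGraph.dist_le _)
        simpa [SimpleGraph.Walk.length_cons] using
          Nat.one_le_iff_ne_zero.mpr (fun h0 => hgg
            (((SimpleGraph.dist_eq_zero_iff_eq_or_not_reachable).mp h0).resolve_right
              (fun hr => hr ⟨SimpleGraph.Walk.cons hadj SimpleGraph.Walk.nil⟩)))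
      · intro v hv _
        simp only [SimpleGraph.Walk.support_cons, SimpleGraph.Walk.support_nil,
          List.mem_cons, List.mem_singleton] at hv
        rcases hv with rfl | rfl | h'
        · exact Or.inl rfl
        · exact Or.inr rfl
        · exact absurd h' (by simp)
    · rcases fin2 i with rfl | rfl <;> rcases fin2 j with rfl | rfl
      · exact vis00 g g' hne
      · exact vis01 g g' hne
      · exact visible_symm (vis01 g' g (Ne.symm hne))
      · exact vis11 g g' hne
  have hXeq : X = ((fun v => (v, (0 : Fin 2))) '' Set.univ) ∪
      ((fun v => (v, (1 : Fin 2))) '' S) := by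
    ext ⟨g, i⟩
    simp only [hX, Set.mem_setOf_eq, Set.mem_union, Set.mem_image, Set.mem_univ, true_and,
      Prod.mk.injEq]
    constructor
    · rintro (rfl | hS)
      · exact Or.inl ⟨g, rfl, rfl⟩
      · rcases fin2 i with rfl | rfl
        · exact Or.inl ⟨g, rfl, rfl⟩
        · exact Or.inr ⟨g, hS, rfl, rfl⟩
    · rintro (⟨v, rfl, rfl⟩ | ⟨v, hv, rfl, rfl⟩)
      · exact Or.inl rfl
      · exact Or.inr hv
  have hinj : ∀ c : Fin 2, Function.Injective (fun v : V => (v, c)) := by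
    intro c a b hab
    exact (Prod.mk.injEq _ _ _ _ ▸ hab).1
  have hcardX : X.ncard = Fintype.card V + S.ncard := by
    rw [hXeq, Set.ncard_union_eq ?_ (Set.toFinite _) (Set.toFinite _)]
    · rw [Set.ncard_image_of_injective _ (hinj 0), Set.ncard_image_of_injective _ (hinj 1),
        Set.ncard_univ, Nat.card_eq_fintype_card]
    · rw [Set.disjoint_left]
      rintro p ⟨v, -, rfl⟩ ⟨w, -, hw⟩
      have := congrArg Prod.snd hw
      simp only at this
      exact one_ne this
  have hmem : mu G + Fintype.card V ∈
      {n | ∃ Y : Set (V × Fin 2), IsMVSet GP Y ∧ Y.ncard = n} := by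
    refine ⟨X, hMV, ?_⟩
    rw [hcardX, heq, ← hcardS, Nat.add_comm]
  refine le_csSup ⟨Fintype.card (V × Fin 2), ?_⟩ hmem
  rintro n ⟨Y, -, rfl⟩
  rw [← Nat.card_eq_fintype_card, ← Set.ncard_univ]
  exact Set.ncard_le_ncard (Set.subset_univ Y) Set.finite_univ
end
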